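/- Let K be a field and n ≥ 2. The ideal ⟨X², Y²⟩ of K[X, Y] is an atom of the multiplicative monoid of nonzero ideals of K[X, Y]: it cannot be written as a product I·J of two proper nonzero ideals both strictly containing it. -/

import Mathlib

open MvPolynomial

section Aux

variable {K : Type*} [Field K]

local notation "R" => MvPolynomial (Fin 2) K

private theorem sq_atom_const_zero (I : Ideal (MvPolynomial (Fin 2) K)) (hI : I ≠ ⊤)
    (h1 : (X 0 : R)^2 ∈ I) (h2 : (X 1 : R)^2 ∈ I)
    {f : R} (hf : f ∈ I) : constantCoeff f = 0 := by
  by_contra hc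
  apply hI
  rw [← Ideal.radical_eq_top, Ideal.eq_top_iff_one]
  have hX0 : (X 0 : R) ∈ I.radical := ⟨2, h1⟩
  have hX1 : (X 1 : R) ∈ I.radical := ⟨2, h2⟩
  have hspan : Ideal.span (MvPolynomial.X '' (Set.univ : Set (Fin 2)) : Set R) ≤ I.radical := by
    rw [Ideal.span_le]
    rintro _ ⟨i, -, rfl⟩
    fin_cases i
    · exact hX0
    · exact hX1
  have hmem : f - MvPolynomial.C (constantCoeff f) ∈
      Ideal.span (MvPolynomial.X '' (Set.univ : Set (Fin 2)) : Set R) := by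
    rw [mem_ideal_span_X_image]
    intro m hm
    rw [MvPolynomial.mem_support_iff] at hm
    by_contra hall
    push_neg at hall
    have hm0 : m = 0 := by
      ext i
      simpa using hall i (Set.mem_univ i)
    rw [hm0] at hm
    apply hm
    simp [coeff_sub, coeff_zero_C, ← constantCoeff_eq]
  have hCc : MvPolynomial.C (constantCoeff f) ∈ I.radical := by
    have := I.radical.sub_mem (I.le_radical hf) (hspan hmem)
    simpa using this
  have : MvPolynomial.C (constantCoeff f) * MvPolynomial.C (constantCoeff f)⁻¹ ∈ I.radical :=
    I.radical.mul_mem_right _ hCc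
  rw [← MvPolynomial.C_mul, mul_inv_cancel₀ hc] at this
  simpa using this

private noncomputable def cA (f : R) : K := constantCoeff (pderiv 0 f)
private noncomputable def cB (f : R) : K := constantCoeff (pderiv 1 f)
private noncomputable def lam (f : R) : K := constantCoeff (pderiv 0 (pderiv 1 f))

private theorem sq_atom_lam_span {h : R}
    (hh : h ∈ Ideal.span {(X 0 : R)^2, (X 1 : R)^2}) : lam h = 0 := by
  rw [Ideal.mem_span_pair] at hh
  obtain ⟨p, q, rfl⟩ := hh
  simp [lam, pderiv_X, Pi.single_apply]

private theorem sq_atom_lam_mul {f g : R} (hf : constantCoeff f = 0)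
    (hg : constantCoeff g = 0) :
    lam (f * g) = cA f * cB g + cB f * cA g := by
  simp [lam, cA, cB, pderiv_mul, hf, hg]
  ring

private noncomputable def subst (u v : K) : MvPolynomial (Fin 2) K →ₐ[K] Polynomial K :=
  aeval ![Polynomial.C u * Polynomial.X, Polynomial.C v * Polynomial.X]

private theorem subst_coeff (u v : K) (f : R) :
    (subst u v f).coeff 0 = constantCoeff f ∧
    (subst u v f).coeff 1 = u * cA f + v * cB f := by
  induction f using MvPolynomial.induction_on with
  | C a => simp [subst, cA, cB]
  | add p q hp hq =>
    constructor
    · simp [hp.1, hq.1]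
    · simp only [map_add, Polynomial.coeff_add, hp.2, hq.2, cA, cB]
      ring
  | mul_X p i hp =>
    have key : ∀ (w : K), ((subst u v p) * (Polynomial.C w * Polynomial.X)).coeff 0 = 0 ∧
        ((subst u v p) * (Polynomial.C w * Polynomial.X)).coeff 1 = w * constantCoeff p := by
      intro w
      have e : (subst u v p) * (Polynomial.C w * Polynomial.X)
          = ((subst u v p) * Polynomial.C w) * Polynomial.X := by ring
      rw [e]
      constructor
      · exact Polynomial.coeff_mul_X_zero _
      · rw [show (1:ℕ) = 0 + 1 from rfl, Polynomial.coeff_mul_X, Polynomial.coeff_mul_C, hp.1,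
          mul_comm]
    fin_cases i <;> simp only [Fin.mk_zero, Fin.mk_one, Fin.isValue] <;> rw [map_mul]
    · have e2 : subst u v (X 0) = Polynomial.C u * Polynomial.X := by
        simp [subst]
      rw [e2]
      refine ⟨by rw [(key u).1]; simp, ?_⟩
      rw [(key u).2]
      simp [cA, cB, pderiv_mul, pderiv_X, Pi.single_apply, mul_comm]
    · have e2 : subst u v (X 1) = Polynomial.C v * Polynomial.X := by
        simp [subst]
      rw [e2]
      refine ⟨by rw [(key v).1]; simp, ?_⟩
      rw [(key v).2]
      simp [cA, cB, pderiv_mul, pderiv_X, Pi.single_apply, mul_comm]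

private theorem sq_atom_dvd_mul (u v : K) (I J : Ideal (MvPolynomial (Fin 2) K))
    (hI : ∀ f ∈ I, (Polynomial.X : Polynomial K)^2 ∣ subst u v f)
    (hJ : ∀ g ∈ J, (Polynomial.X : Polynomial K) ∣ subst u v g) :
    ∀ h ∈ I * J, (Polynomial.X : Polynomial K)^3 ∣ subst u v h := by
  intro h hh
  refine Submodule.mul_induction_on hh ?_ ?_
  · intro f hf g hg
    rw [map_mul]
    have e : (Polynomial.X : Polynomial K)^3 = Polynomial.X^2 * Polynomial.X := by ring
    rw [e]
    exact mul_dvd_mul (hI f hf) (hJ g hg)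
  · intro x y hx hy
    rw [map_add]
    exact dvd_add hx hy

end Aux

/-- The ideal `⟨X², Y²⟩` of `K[X, Y]` is an atom of the monoid of nonzero ideals:
whenever it equals a product `I·J` of two ideals, one of `I, J` is the unit ideal. -/
theorem span_sq_atom {K : Type*} [Field K]
    (I J : Ideal (MvPolynomial (Fin 2) K))
    (h : Ideal.span {(X 0 : MvPolynomial (Fin 2) K) ^ 2, (X 1 : MvPolynomial (Fin 2) K) ^ 2}
      = I * J) :
    I = ⊤ ∨ J = ⊤ := by
  by_contra hcon
  push_neg at hcon
  obtain ⟨hI, hJ⟩ := hcon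
  set R' := MvPolynomial (Fin 2) K
  have hX0IJ : (X 0 : R')^2 ∈ I * J := h ▸ Ideal.subset_span (by simp)
  have hX1IJ : (X 1 : R')^2 ∈ I * J := h ▸ Ideal.subset_span (by simp)
  have hX0I : (X 0 : R')^2 ∈ I := Ideal.mul_le_left hX0IJ
  have hX1I : (X 1 : R')^2 ∈ I := Ideal.mul_le_left hX1IJ
  have hX0J : (X 0 : R')^2 ∈ J := Ideal.mul_le_right hX0IJ
  have hX1J : (X 1 : R')^2 ∈ J := Ideal.mul_le_right hX1IJ
  have cI : ∀ f ∈ I, constantCoeff f = 0 := fun f hf =>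
    sq_atom_const_zero I hI hX0I hX1I hf
  have cJ : ∀ g ∈ J, constantCoeff g = 0 := fun g hg =>
    sq_atom_const_zero J hJ hX0J hX1J hg
  -- coefficient of X² in `subst u v (X i ^ 2)`
  have subst_sq : ∀ (u v w : K) (i : Fin 2),
      subst u v ((X i : R')^2) = (subst u v (X i))^2 := fun u v w i => map_pow _ _ _
  -- Step 1: find g ∈ J with cA g ≠ 0
  have step1 : ∃ g ∈ J, cA g ≠ 0 := by
    by_contra hng
    push_neg at hng
    have hJ2 : ∀ g ∈ J, (Polynomial.X : Polynomial K)^2 ∣ subst (1:K) 0 g := by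
      intro g hg
      rw [Polynomial.X_pow_dvd_iff]
      intro d hd
      interval_cases d
      · rw [(subst_coeff 1 0 g).1, cJ g hg]
      · rw [(subst_coeff 1 0 g).2, hng g hg]
        ring
    have hI1 : ∀ f ∈ I, (Polynomial.X : Polynomial K) ∣ subst (1:K) 0 f := by
      intro f hf
      rw [Polynomial.X_dvd_iff, (subst_coeff 1 0 f).1, cI f hf]
    have hdvd : (Polynomial.X : Polynomial K)^3 ∣ subst (1:K) 0 ((X 0 : R')^2) := by
      have := sq_atom_dvd_mul (1:K) 0 J I hJ2 hI1 ((X 0 : R')^2)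
        (by rwa [mul_comm J I])
      exact this
    rw [subst_sq 1 0 0 0] at hdvd
    have e : subst (1:K) 0 (X 0 : R') = Polynomial.C 1 * Polynomial.X := by simp [subst]
    rw [e, Polynomial.X_pow_dvd_iff] at hdvd
    have := hdvd 2 (by norm_num)
    simp [mul_pow, ← Polynomial.C_pow, Polynomial.coeff_C_mul, Polynomial.coeff_X_pow] at this
  obtain ⟨g, hgJ, hga⟩ := step1
  -- Step 2: orthogonality
  have orth : ∀ f ∈ I, cA f * cB g + cB f * cA g = 0 := by
    intro f hf
    have hfg : f * g ∈ Ideal.span {(X 0 : R')^2, (X 1 : R')^2} :=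
      h ▸ Ideal.mul_mem_mul hf hgJ
    rw [← sq_atom_lam_mul (cI f hf) (cJ g hgJ)]
    exact sq_atom_lam_span hfg
  -- Step 3: final contradiction with the substitution X ↦ (cB g)·T, Y ↦ (cA g)·T
  have hI2 : ∀ f ∈ I, (Polynomial.X : Polynomial K)^2 ∣ subst (cB g) (cA g) f := by
    intro f hf
    rw [Polynomial.X_pow_dvd_iff]
    intro d hd
    interval_cases d
    · rw [(subst_coeff _ _ f).1, cI f hf]
    · rw [(subst_coeff (cB g) (cA g) f).2]
      have := orth f hf
      linear_combination this
  have hJ1 : ∀ g' ∈ J, (Polynomial.X : Polynomial K) ∣ subst (cB g) (cA g) g' := by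
    intro g' hg'
    rw [Polynomial.X_dvd_iff, (subst_coeff _ _ g').1, cJ g' hg']
  have hdvd : (Polynomial.X : Polynomial K)^3 ∣ subst (cB g) (cA g) ((X 1 : R')^2) :=
    sq_atom_dvd_mul _ _ I J hI2 hJ1 _ hX1IJ
  rw [subst_sq (cB g) (cA g) 0 1] at hdvd
  have e : subst (cB g) (cA g) (X 1 : R') = Polynomial.C (cA g) * Polynomial.X := by
    simp [subst]
  rw [e, Polynomial.X_pow_dvd_iff] at hdvd
  have h2 := hdvd 2 (by norm_num)
  rw [mul_pow, ← Polynomial.C_pow] at h2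
  simp only [Polynomial.coeff_C_mul, Polynomial.coeff_X_pow] at h2
  norm_num at h2
  exact hga h2
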